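/- Suppose X ∈ ℝ^{n×p} has the self-regularizing property: there exists a unit vector w ∈ ℝⁿ with h := Xᵀw/√n ⪰ τ·1 for a constant τ > 0. Let Π = I − wwᵀ. Then for every ε ∈ ℝⁿ and every β ∈ ℝ^p, the identity (1/n)‖ε − Xβ‖₂² = (1/n)‖ε − ΠXβ‖₂² + (hᵀβ)² − (2 εᵀw/√n)(hᵀβ) holds; in particular, for β ⪰ 0 one has hᵀβ ≥ τ·1ᵀβ, so the least-squares objective decomposes into a fitting term with modified design ΠX, a squared penalty (hᵀβ)² ≥ τ²(1ᵀβ)², and a cross term. -/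

import Mathlib

open Matrix Finset

noncomputable section

/-- Squared Euclidean norm of a vector. -/
def sqNorm {n : ℕ} (v : Fin n → ℝ) : ℝ := ∑ i, (v i) ^ 2

lemma sqNorm_add {n : ℕ} (a b : Fin n → ℝ) :
    sqNorm (a + b) = sqNorm a + 2 * (a ⬝ᵥ b) + sqNorm b := by
  simp only [sqNorm, dotProduct, Pi.add_apply, add_sq]
  rw [Finset.sum_add_distrib, Finset.sum_add_distrib, Finset.mul_sum]
  ring_nf

theorem stmt_3 (n p : ℕ) (hn : 0 < n) (X : Matrix (Fin n) (Fin p) ℝ)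
    (τ : ℝ) (hτ : 0 < τ) (w : Fin n → ℝ) (hw : sqNorm w = 1)
    (h : Fin p → ℝ) (hh : h = fun j => (X.transpose.mulVec w) j / Real.sqrt n)
    (hsep : ∀ j, τ ≤ h j)
    (P : Matrix (Fin n) (Fin n) ℝ) (hP : P = 1 - Matrix.vecMulVec w w) :
    (∀ (ε : Fin n → ℝ) (β : Fin p → ℝ),
      (1 / (n : ℝ)) * sqNorm (ε - X.mulVec β)
        = (1 / (n : ℝ)) * sqNorm (ε - (P * X).mulVec β) + (h ⬝ᵥ β) ^ 2
          - (2 * (ε ⬝ᵥ w) / Real.sqrt n) * (h ⬝ᵥ β)) ∧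
    (∀ β : Fin p → ℝ, (∀ j, 0 ≤ β j) →
      τ * ∑ j, β j ≤ h ⬝ᵥ β ∧ τ ^ 2 * (∑ j, β j) ^ 2 ≤ (h ⬝ᵥ β) ^ 2) := by
  have hn' : (0:ℝ) < n := Nat.cast_pos.mpr hn
  have hs : Real.sqrt n * Real.sqrt n = n := Real.mul_self_sqrt (le_of_lt hn')
  have hs0 : Real.sqrt n ≠ 0 := by positivity
  constructor
  · intro ε β
    set v := X.mulVec β with hv
    set c := w ⬝ᵥ v with hc
    have hhb : h ⬝ᵥ β = c / Real.sqrt n := by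
      rw [hh]
      simp only [dotProduct]
      have e : ∀ x, (X.transpose.mulVec w) x / Real.sqrt n * β x
          = ((X.transpose.mulVec w) x * β x) / Real.sqrt n := fun x => by ring
      simp only [e]
      rw [← Finset.sum_div]
      congr 1
      rw [hc, hv, Matrix.dotProduct_mulVec, Matrix.mulVec_transpose]
      rfl
    have hPX : (P * X).mulVec β = v - c • w := by
      rw [hP, Matrix.sub_mul, Matrix.one_mul, Matrix.sub_mulVec, ← Matrix.mulVec_mulVec, ← hv]
      congr 1
      funext i
      simp only [Matrix.mulVec, Matrix.vecMulVec_apply, dotProduct, Pi.smul_apply,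
        smul_eq_mul, hc]
      rw [Finset.sum_mul]
      apply Finset.sum_congr rfl
      intro k _
      ring
    have key : ε - (P * X).mulVec β = (ε - v) + c • w := by
      rw [hPX]; ext i; simp; ring
    rw [key, sqNorm_add, hhb]
    have hvw : v ⬝ᵥ w = c := by rw [hc, dotProduct_comm]
    have hcw : (ε - v) ⬝ᵥ (c • w) = c * (ε ⬝ᵥ w) - c * c := by
      rw [dotProduct_smul, sub_dotProduct, hvw, smul_eq_mul]
      ring
    have hcsq : sqNorm (c • w) = c * c := by
      have : sqNorm (c • w) = c^2 * sqNorm w := by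
        simp [sqNorm, mul_pow, Finset.mul_sum]
      rw [this, hw]; ring
    rw [hcw, hcsq]
    field_simp
    ring_nf
    rw [Real.sq_sqrt hn'.le]; ring
  · intro β hβ
    have h1 : τ * ∑ j, β j ≤ h ⬝ᵥ β := by
      rw [Finset.mul_sum]
      apply Finset.sum_le_sum
      intro j _
      exact mul_le_mul_of_nonneg_right (hsep j) (hβ j)
    refine ⟨h1, ?_⟩
    have h0 : 0 ≤ τ * ∑ j, β j := by
      apply mul_nonneg hτ.le (Finset.sum_nonneg fun j _ => hβ j)
    calc τ ^ 2 * (∑ j, β j) ^ 2 = (τ * ∑ j, β j) ^ 2 := by ring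
      _ ≤ (h ⬝ᵥ β) ^ 2 := by
          apply sq_le_sq' <;> nlinarith
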